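/- arXiv:1905.04530 — 10 statements merged into one kernel-verified Lean document; each statement's English description precedes it below -/
import Mathlib

section
/- Let R be a reduced commutative ring with unity and Y a set of prime ideals with intersection zero. Two nonzero annihilating ideals I, J of R satisfy IJ = {0} if and only if the sets {P ∈ Y : I ⊄ P} and {P ∈ Y : J ⊄ P} are disjoint. -/
/-- `I` is a nonzero annihilating ideal: `I ≠ 0` and `Ann(I) ≠ 0`. -/
def IsAnnIdeal {R : Type*} [CommRing R] (I : Ideal R) : Prop :=
  I ≠ ⊥ ∧ ∃ x : R, x ≠ 0 ∧ ∀ i ∈ I, x * i = 0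

theorem stmt3 {R : Type*} [CommRing R] [IsReduced R] (Y : Set (Ideal R))
    (hY : ∀ P ∈ Y, P.IsPrime) (h0 : sInf Y = ⊥) (I J : Ideal R)
    (hI : IsAnnIdeal I) (hJ : IsAnnIdeal J) :
    I * J = ⊥ ↔ {P ∈ Y | ¬ I ≤ P} ∩ {P ∈ Y | ¬ J ≤ P} = ∅ := by
  constructor
  · intro h
    ext P
    simp only [Set.mem_inter_iff, Set.mem_setOf_eq, Set.mem_empty_iff_false, iff_false]
    rintro ⟨⟨hPY, hIP⟩, _, hJP⟩
    have := hY P hPY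
    have : I * J ≤ P := h ▸ bot_le
    rcases (Ideal.IsPrime.mul_le (hY P hPY)).mp this with h1 | h1
    · exact hIP h1
    · exact hJP h1
  · intro h
    have hle : I * J ≤ sInf Y := by
      apply le_sInf
      intro P hPY
      rcases em (I ≤ P) with hIP | hIP
      · exact le_trans Ideal.mul_le_left hIP
      · rcases em (J ≤ P) with hJP | hJP
        · exact le_trans Ideal.mul_le_right hJP
        · exact absurd (Set.ext_iff.mp h P |>.mp ⟨⟨hPY, hIP⟩, hPY, hJP⟩) (by simp)
    rw [h0] at hle
    exact le_bot_iff.mp hle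
end

section
/- Let R be a reduced commutative ring with unity and suppose for distinct nonzero zero-divisors a, b there exists a nonzero zero-divisor c distinct from a and b with ac = 0 and bc = 0. Then, taking Y ⊆ Min(R) with ⋂ Y = {0}, the set {P ∈ Y : a ∉ P} ∪ {P ∈ Y : b ∉ P} is not dense in Y; conversely, if ab ≠ 0 and this union is not dense, then such a c exists (so d(a,b) = 2 in Γ(R)). -/
theorem stmt6 {R : Type*} [CommRing R] [IsReduced R] (Y : Set (Ideal R))
    (hY : ∀ P ∈ Y, P ∈ minimalPrimes R) (h0 : sInf Y = ⊥)
    (a b : R) (ha : a ≠ 0) (hb : b ≠ 0) (hab : a ≠ b)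
    (hza : ∃ x : R, x ≠ 0 ∧ x * a = 0) (hzb : ∃ x : R, x ≠ 0 ∧ x * b = 0) :
    ((∃ c : R, c ≠ 0 ∧ (∃ x : R, x ≠ 0 ∧ x * c = 0) ∧ c ≠ a ∧ c ≠ b ∧
        a * c = 0 ∧ b * c = 0) →
      ∃ d : R, d ≠ 0 ∧ {P ∈ Y | d ∉ P} ∩ ({P ∈ Y | a ∉ P} ∪ {P ∈ Y | b ∉ P}) = ∅) ∧
    (a * b ≠ 0 →
      (∃ d : R, d ≠ 0 ∧ {P ∈ Y | d ∉ P} ∩ ({P ∈ Y | a ∉ P} ∪ {P ∈ Y | b ∉ P}) = ∅) →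
      ∃ c : R, c ≠ 0 ∧ (∃ x : R, x ≠ 0 ∧ x * c = 0) ∧ c ≠ a ∧ c ≠ b ∧
        a * c = 0 ∧ b * c = 0) := by
  constructor
  · rintro ⟨c, hc0, _, _, _, hac, hbc⟩
    refine ⟨c, hc0, ?_⟩
    ext P
    simp only [Set.mem_inter_iff, Set.mem_union, Set.mem_setOf_eq, Set.mem_empty_iff_false,
      iff_false]
    rintro ⟨⟨hPY, hcP⟩, h⟩
    have hprime : P.IsPrime := (hY P hPY).1.1
    rcases h with ⟨_, haP⟩ | ⟨_, hbP⟩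
    · rcases hprime.mem_or_mem (show a * c ∈ P by rw [hac]; exact P.zero_mem) with h' | h'
      · exact haP h'
      · exact hcP h'
    · rcases hprime.mem_or_mem (show b * c ∈ P by rw [hbc]; exact P.zero_mem) with h' | h'
      · exact hbP h'
      · exact hcP h'
  · rintro hab0 ⟨d, hd0, hempty⟩
    have key : ∀ e : R, (∀ P ∈ Y, d ∉ P → e ∈ P) → d * e = 0 := by
      intro e he
      have : d * e ∈ sInf Y := by
        rw [Submodule.mem_sInf]
        intro P hPY
        by_cases hdP : d ∈ P
        · exact Ideal.mul_mem_right e P hdP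
        · exact Ideal.mul_mem_left P d (he P hPY hdP)
      rw [h0] at this
      simpa using this
    have hmem : ∀ P ∈ Y, d ∉ P → a ∈ P ∧ b ∈ P := by
      intro P hPY hdP
      constructor
      · by_contra haP
        have : P ∈ ({P ∈ Y | d ∉ P} ∩ ({P ∈ Y | a ∉ P} ∪ {P ∈ Y | b ∉ P})) :=
          ⟨⟨hPY, hdP⟩, Or.inl ⟨hPY, haP⟩⟩
        rw [hempty] at this; exact this
      · by_contra hbP
        have : P ∈ ({P ∈ Y | d ∉ P} ∩ ({P ∈ Y | a ∉ P} ∪ {P ∈ Y | b ∉ P})) :=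
          ⟨⟨hPY, hdP⟩, Or.inr ⟨hPY, hbP⟩⟩
        rw [hempty] at this; exact this
    have hda : d * a = 0 := key a fun P hPY hdP => (hmem P hPY hdP).1
    have hdb : d * b = 0 := key b fun P hPY hdP => (hmem P hPY hdP).2
    refine ⟨d, hd0, ⟨a, ha, by rw [mul_comm]; exact hda⟩, ?_, ?_, by rw [mul_comm]; exact hda,
      by rw [mul_comm]; exact hdb⟩
    · intro heq
      exact ha (IsReduced.eq_zero a ⟨2, by rw [sq]; nth_rewrite 1 [← heq]; exact hda⟩)
    · intro heq
      exact hb (IsReduced.eq_zero b ⟨2, by rw [sq]; nth_rewrite 1 [← heq]; exact hdb⟩)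
end

section
/- Let R be a reduced commutative ring with unity and Y a set of prime ideals with intersection zero. Two adjacent vertices I and J of AG(R) are orthogonal (i.e., IJ = 0 and no vertex K is adjacent to both I and J) if and only if {P ∈ Y : I ⊄ P} and {P ∈ Y : J ⊄ P} are disjoint and their union is dense in Y. -/
lemma sq_bot_aux {R : Type*} [CommRing R] [IsReduced R] {I : Ideal R}
    (h : I * I = ⊥) : I = ⊥ := by
  rw [eq_bot_iff]
  intro x hx
  have hxx : x * x ∈ I * I := Ideal.mul_mem_mul hx hx
  rw [h, Ideal.mem_bot] at hxx
  have : IsNilpotent x := ⟨2, by rwa [pow_two]⟩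
  simpa [Ideal.mem_bot] using this.eq_zero

theorem stmt7 {R : Type*} [CommRing R] [IsReduced R] (Y : Set (Ideal R))
    (hY : ∀ P ∈ Y, P.IsPrime) (h0 : sInf Y = ⊥)
    (I J : Ideal R) (hI : IsAnnIdeal I) (hJ : IsAnnIdeal J) (hne : I ≠ J)
    (hadj : I * J = ⊥) :
    (¬ ∃ K : Ideal R, IsAnnIdeal K ∧ K ≠ I ∧ K ≠ J ∧ I * K = ⊥ ∧ J * K = ⊥) ↔
      ({P ∈ Y | ¬ I ≤ P} ∩ {P ∈ Y | ¬ J ≤ P} = ∅ ∧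
        ∀ K : Ideal R, {P ∈ Y | ¬ K ≤ P}.Nonempty →
          ({P ∈ Y | ¬ K ≤ P} ∩ ({P ∈ Y | ¬ I ≤ P} ∪ {P ∈ Y | ¬ J ≤ P})).Nonempty) := by
  have key : ∀ K L : Ideal R, (∀ P ∈ Y, K ≤ P ∨ L ≤ P) → K * L = ⊥ := by
    intro K L h
    rw [eq_bot_iff, ← h0]
    apply le_sInf
    intro P hP
    rcases h P hP with h' | h'
    · exact le_trans Ideal.mul_le_left h'
    · exact le_trans Ideal.mul_le_right h'
  have split : ∀ K L : Ideal R, K * L = ⊥ → ∀ P ∈ Y, K ≤ P ∨ L ≤ P := by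
    intro K L h P hP
    exact ((hY P hP).mul_le).mp (le_of_eq_of_le h bot_le)
  constructor
  · intro hno
    constructor
    · ext P
      simp only [Set.mem_inter_iff, Set.mem_setOf_eq, Set.mem_empty_iff_false, iff_false]
      rintro ⟨⟨hPY, hIP⟩, _, hJP⟩
      rcases split I J hadj P hPY with h | h
      exacts [hIP h, hJP h]
    · intro K hKne
      by_contra hempty
      rw [Set.not_nonempty_iff_eq_empty] at hempty
      have hsplit : ∀ P ∈ Y, ¬ K ≤ P → I ≤ P ∧ J ≤ P := by
        intro P hP hKP
        constructor <;> by_contra h'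
        · have : P ∈ ({P ∈ Y | ¬ K ≤ P} ∩ ({P ∈ Y | ¬ I ≤ P} ∪ {P ∈ Y | ¬ J ≤ P})) :=
            ⟨⟨hP, hKP⟩, Or.inl ⟨hP, h'⟩⟩
          rw [hempty] at this; exact this
        · have : P ∈ ({P ∈ Y | ¬ K ≤ P} ∩ ({P ∈ Y | ¬ I ≤ P} ∪ {P ∈ Y | ¬ J ≤ P})) :=
            ⟨⟨hP, hKP⟩, Or.inr ⟨hP, h'⟩⟩
          rw [hempty] at this; exact this
      have hKI : I * K = ⊥ := key I K (fun P hP => by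
        by_cases h : K ≤ P
        · exact Or.inr h
        · exact Or.inl (hsplit P hP h).1)
      have hKJ : J * K = ⊥ := key J K (fun P hP => by
        by_cases h : K ≤ P
        · exact Or.inr h
        · exact Or.inl (hsplit P hP h).2)
      obtain ⟨P, hPY, hKP⟩ := hKne
      have hKbot : K ≠ ⊥ := fun h => hKP (h ▸ bot_le)
      -- pick a nonzero element of I; it annihilates K
      obtain ⟨x, hxI, hx0⟩ : ∃ x ∈ I, x ≠ 0 := by
        by_contra h
        push_neg at h
        exact hI.1 ((eq_bot_iff).mpr fun y hy => Ideal.mem_bot.mpr (h y hy))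
      have hann : ∀ k ∈ K, x * k = 0 := fun k hk => by
        have : x * k ∈ I * K := Ideal.mul_mem_mul hxI hk
        rwa [hKI, Ideal.mem_bot] at this
      have hKneI : K ≠ I := by
        intro h
        subst h
        exact hI.1 (sq_bot_aux (by rwa [mul_comm] at hKI))
      have hKneJ : K ≠ J := by
        intro h
        subst h
        exact hJ.1 (sq_bot_aux (by rwa [mul_comm] at hKJ))
      exact hno ⟨K, ⟨hKbot, x, hx0, hann⟩, hKneI, hKneJ, hKI, hKJ⟩
  · rintro ⟨hdisj, hdense⟩ ⟨K, hKann, hKI, hKJ, hIK, hJK⟩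
    have hKnon : {P ∈ Y | ¬ K ≤ P}.Nonempty := by
      by_contra h
      rw [Set.not_nonempty_iff_eq_empty] at h
      apply hKann.1
      rw [eq_bot_iff, ← h0]
      apply le_sInf
      intro P hP
      by_contra h'
      have : P ∈ {P ∈ Y | ¬ K ≤ P} := ⟨hP, h'⟩
      rw [h] at this; exact this
    obtain ⟨P, ⟨hPY, hKP⟩, hPU⟩ := hdense K hKnon
    have hIP : I ≤ P := (split I K hIK P hPY).resolve_right hKP
    have hJP : J ≤ P := (split J K hJK P hPY).resolve_right hKP
    rcases hPU with ⟨_, h⟩ | ⟨_, h⟩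
    exacts [h hIP, h hJP]
end

section
/- Let R be a reduced commutative ring with unity and Y ⊆ Min(R) with ⋂ Y = {0}. A nonzero zero-divisor a is a vertex of a triangle in Γ(R) (i.e., there exist distinct nonzero zero-divisors b, c, both distinct from a, with ab = ac = bc = 0) if and only if h_Y(a) = {P ∈ Y : a ∈ P} contains at least two points. -/
lemma key_ann {R : Type*} [CommRing R] [IsReduced R] {P : Ideal R}
    (hP : P ∈ minimalPrimes R) {a : R} (haP : a ∈ P) :
    ∃ s : R, s ∉ P ∧ s * a = 0 := by
  have hPp : P.IsPrime := hP.1.1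
  -- the submonoid of elements s * a^n with s ∉ P
  let S : Submonoid R :=
    { carrier := {x | ∃ n : ℕ, ∃ s : R, s ∉ P ∧ x = s * a ^ n}
      one_mem' := ⟨0, 1, fun h => hPp.ne_top ((Ideal.eq_top_iff_one P).mpr h), by simp⟩
      mul_mem' := by
        rintro x y ⟨n, s, hs, rfl⟩ ⟨m, t, ht, rfl⟩
        exact ⟨n + m, s * t, fun h => ((hPp.mem_or_mem h).elim hs ht), by ring⟩ }
  by_cases h0 : (0 : R) ∈ S
  · obtain ⟨n, s, hs, hs0⟩ := h0
    refine ⟨s, hs, ?_⟩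
    have hnil : IsNilpotent (s * a) := by
      refine ⟨n + 1, ?_⟩
      have : (s * a) ^ (n + 1) = s ^ n * a * (s * a ^ n) := by ring
      rw [this, ← hs0, mul_zero]
    exact hnil.eq_zero
  · exfalso
    have hdisj : Disjoint ((⊥ : Ideal R) : Set R) (S : Set R) := by
      rw [Set.disjoint_left]
      rintro x hx hxS
      rw [SetLike.mem_coe, Ideal.mem_bot] at hx
      exact h0 (hx ▸ hxS)
    obtain ⟨p, hp, -, hpd⟩ := Ideal.exists_le_prime_disjoint ⊥ S hdisj
    have hpP : p ≤ P := by
      intro x hx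
      by_contra hxP
      exact Set.disjoint_left.mp hpd hx ⟨0, x, hxP, by simp⟩
    have haS : a ∈ (S : Set R) := ⟨1, 1, fun h => hPp.ne_top ((Ideal.eq_top_iff_one P).mpr h), by simp⟩
    have hap : a ∉ p := fun h => Set.disjoint_left.mp hpd h haS
    exact hap (hP.2 ⟨hp, bot_le⟩ hpP haP)

theorem stmt8 {R : Type*} [CommRing R] [IsReduced R] (Y : Set (Ideal R))
    (hY : ∀ P ∈ Y, P ∈ minimalPrimes R) (h0 : sInf Y = ⊥)
    (a : R) (ha : a ≠ 0) (hza : ∃ x : R, x ≠ 0 ∧ x * a = 0) :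
    (∃ b c : R, b ≠ 0 ∧ c ≠ 0 ∧ (∃ x : R, x ≠ 0 ∧ x * b = 0) ∧
      (∃ x : R, x ≠ 0 ∧ x * c = 0) ∧ b ≠ a ∧ c ≠ a ∧ b ≠ c ∧
      a * b = 0 ∧ a * c = 0 ∧ b * c = 0) ↔
    ∃ P ∈ Y, ∃ Q ∈ Y, P ≠ Q ∧ a ∈ P ∧ a ∈ Q := by
  have hmem : ∀ x : R, x ≠ 0 → ∃ P ∈ Y, x ∉ P := by
    intro x hx
    by_contra h
    push_neg at h
    exact hx (by simpa using (h0 ▸ (Ideal.mem_sInf.mpr fun {P} hP => h P hP) : x ∈ (⊥ : Ideal R)))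
  constructor
  · rintro ⟨b, c, hb, hc, -, -, -, -, -, hab, hac, hbc⟩
    obtain ⟨P, hPY, hbP⟩ := hmem b hb
    obtain ⟨Q, hQY, hcQ⟩ := hmem c hc
    have hPp : P.IsPrime := (hY P hPY).1.1
    have hQp : Q.IsPrime := (hY Q hQY).1.1
    have haP : a ∈ P := ((hPp.mem_or_mem (hab ▸ P.zero_mem)).resolve_right hbP)
    have haQ : a ∈ Q := ((hQp.mem_or_mem (hac ▸ Q.zero_mem)).resolve_right hcQ)
    have hcP : c ∈ P := ((hPp.mem_or_mem (hbc ▸ P.zero_mem)).resolve_left hbP)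
    exact ⟨P, hPY, Q, hQY, fun h => hcQ (h ▸ hcP), haP, haQ⟩
  · rintro ⟨P, hPY, Q, hQY, hPQ, haP, haQ⟩
    have hPm := hY P hPY
    have hQm := hY Q hQY
    have hPp : P.IsPrime := hPm.1.1
    have hQp : Q.IsPrime := hQm.1.1
    -- P ⊄ Q by minimality: pick y ∈ P \ Q
    have hnle : ¬ P ≤ Q := fun h => hPQ (le_antisymm h (hQm.2 ⟨hPp, bot_le⟩ h))
    obtain ⟨y, hyP, hyQ⟩ := Set.not_subset.mp hnle
    -- t ∉ Q with t * a = 0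
    obtain ⟨t, htQ, hta⟩ := key_ann hQm haQ
    -- b := t * y : in P, not in Q, annihilates a
    set b := t * y with hbdef
    have hbQ : b ∉ Q := fun h => ((hQp.mem_or_mem h).elim htQ hyQ)
    have hbP : b ∈ P := P.mul_mem_left t hyP
    have hb0 : b ≠ 0 := fun h => hbQ (h ▸ Q.zero_mem)
    have hab : a * b = 0 := by rw [hbdef, ← mul_assoc, mul_comm a t, hta, zero_mul]
    -- c := s * s' with s,s' ∉ P, s*a = 0, s'*b = 0
    obtain ⟨s, hsP, hsa⟩ := key_ann hPm haP
    obtain ⟨s', hs'P, hs'b⟩ := key_ann hPm hbP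
    set c := s * s' with hcdef
    have hcP : c ∉ P := fun h => ((hPp.mem_or_mem h).elim hsP hs'P)
    have hc0 : c ≠ 0 := fun h => hcP (h ▸ P.zero_mem)
    have hac : a * c = 0 := by rw [hcdef, ← mul_assoc, mul_comm a s, hsa, zero_mul]
    have hbc : b * c = 0 := by
      rw [hcdef, mul_comm s s', ← mul_assoc, mul_comm b s', hs'b, zero_mul]
    refine ⟨b, c, hb0, hc0, ⟨a, ha, hab⟩, ⟨a, ha, hac⟩,
      fun h => hbQ (h ▸ haQ), fun h => hcP (h ▸ haP), fun h => hcP (h ▸ hbP), hab, hac, hbc⟩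
end

section
/- Let R be a reduced commutative ring with unity. A nonzero annihilating ideal I is contained in some maximal element of the set of nonzero annihilating ideals if and only if there exists a minimal prime ideal P over I that belongs to B(R), i.e., P = Ann(x) for some x ∈ R. -/
theorem stmt10 {R : Type*} [CommRing R] [IsReduced R] (I : Ideal R) (hI : IsAnnIdeal I) :
    (∃ M : Ideal R, IsAnnIdeal M ∧ (∀ J : Ideal R, IsAnnIdeal J → M ≤ J → J = M) ∧ I ≤ M) ↔
      ∃ P ∈ I.minimalPrimes, ∃ x : R, ∀ y : R, y ∈ P ↔ y * x = 0 := by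
  constructor
  · rintro ⟨M, ⟨hM0, y, hy0, hyM⟩, hmax, hIM⟩
    have hmemA : ∀ z : R, z ∈ Ideal.torsionOf R R y ↔ z * y = 0 := fun z => by
      rw [Ideal.mem_torsionOf_iff, smul_eq_mul]
    have hMle : M ≤ Ideal.torsionOf R R y := fun i hi =>
      (hmemA i).2 (by rw [mul_comm]; exact hyM i hi)
    have hEq : Ideal.torsionOf R R y = M := by
      apply hmax
      · refine ⟨fun h => hM0 (le_bot_iff.mp (h ▸ hMle)), y, hy0, fun i hi => ?_⟩
        rw [mul_comm]; exact (hmemA i).1 hi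
      · exact hMle
    have hyM' : ∀ z : R, z ∈ M ↔ z * y = 0 := fun z => by rw [← hEq]; exact hmemA z
    have hynM : y ∉ M := fun h =>
      hy0 (IsNilpotent.eq_zero ⟨2, by rw [pow_two]; exact (hyM' y).1 h⟩)
    have hprime : M.IsPrime := by
      constructor
      · intro h
        exact hy0 (by simpa using (hyM' 1).1 (h ▸ Submodule.mem_top))
      · intro a b hab
        by_cases hb : b ∈ M
        · exact Or.inr hb
        · left
          have hby : b * y ≠ 0 := fun h => hb ((hyM' b).2 h)
          have hle : M ≤ Ideal.torsionOf R R (b * y) := by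
            intro m hm
            rw [Ideal.mem_torsionOf_iff, smul_eq_mul]
            calc m * (b * y) = (m * y) * b := by ring
            _ = 0 := by rw [(hyM' m).1 hm, zero_mul]
          have hEq2 : Ideal.torsionOf R R (b * y) = M := by
            apply hmax
            · refine ⟨fun h => hM0 (le_bot_iff.mp (h ▸ hle)), b * y, hby, fun i hi => ?_⟩
              rw [Ideal.mem_torsionOf_iff, smul_eq_mul] at hi
              rw [mul_comm]; exact hi
            · exact hle
          have ha : a ∈ Ideal.torsionOf R R (b * y) := by
            rw [Ideal.mem_torsionOf_iff, smul_eq_mul]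
            calc a * (b * y) = (a * b) * y := by ring
            _ = 0 := (hyM' (a * b)).1 hab
          rw [hEq2] at ha; exact ha
    refine ⟨M, ⟨⟨hprime, hIM⟩, fun Q hQ hQM => ?_⟩, y, hyM'⟩
    intro m hm
    have h0 : m * y ∈ Q := by rw [(hyM' m).1 hm]; exact Q.zero_mem
    rcases hQ.1.mem_or_mem h0 with h | h
    · exact h
    · exact absurd (hQM h) hynM
  · rintro ⟨P, hP, x, hx⟩
    have hprime : P.IsPrime := hP.1.1
    have hIP : I ≤ P := hP.1.2
    have hx0 : x ≠ 0 := fun h =>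
      hprime.ne_top ((Ideal.eq_top_iff_one P).mpr ((hx 1).2 (by rw [h, mul_zero])))
    refine ⟨P, ⟨fun h => hI.1 (le_bot_iff.mp (h ▸ hIP)), x, hx0,
      fun i hi => by rw [mul_comm]; exact (hx i).1 hi⟩, ?_, hIP⟩
    rintro J ⟨hJ0, y, hy0, hyJ⟩ hPJ
    have hynP : y ∉ P := fun h =>
      hy0 (IsNilpotent.eq_zero ⟨2, by rw [pow_two, ← mul_comm y y]; exact hyJ y (hPJ h)⟩)
    refine le_antisymm (fun j hj => ?_) hPJ
    have h0 : j * y ∈ P := by rw [mul_comm, hyJ j hj]; exact P.zero_mem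
    rcases hprime.mem_or_mem h0 with h | h
    · exact h
    · exact absurd h hynP
end

section
/- Let R be a reduced commutative ring with unity. Every nonzero annihilating ideal of R is contained in a maximal element of the set of nonzero annihilating ideals if and only if ⋂_{P ∈ B(R)} P = {0} (i.e., the zero ideal is a fixed-place ideal). -/
/-- The annihilator of an element, as an ideal. -/
def annI {R : Type*} [CommRing R] (x : R) : Ideal R where
  carrier := {y | y * x = 0}
  add_mem' := by
    intro a b ha hb
    simp only [Set.mem_setOf_eq] at *
    rw [add_mul, ha, hb, add_zero]
  zero_mem' := by simp
  smul_mem' := by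
    intro c a ha
    simp only [Set.mem_setOf_eq, smul_eq_mul] at *
    rw [mul_assoc, ha, mul_zero]

lemma mem_annI {R : Type*} [CommRing R] {x y : R} : y ∈ annI x ↔ y * x = 0 := Iff.rfl

lemma red_sq {R : Type*} [CommRing R] [IsReduced R] {z : R} (h : z * z = 0) : z = 0 :=
  IsReduced.eq_zero z ⟨2, by rw [pow_two]; exact h⟩

/-- A maximal annihilating ideal is a prime annihilator ideal. -/
lemma max_ann_prime {R : Type*} [CommRing R] [IsReduced R] {M : Ideal R}
    (hM : IsAnnIdeal M) (hmax : ∀ J : Ideal R, IsAnnIdeal J → M ≤ J → J = M) :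
    M.IsPrime ∧ ∃ x : R, ∀ y : R, y ∈ M ↔ y * x = 0 := by
  obtain ⟨hMbot, z, hz, hzM⟩ := hM
  have hMz : M ≤ annI z := fun m hm => by
    rw [mem_annI, mul_comm]; exact hzM m hm
  have hann : IsAnnIdeal (annI z) := by
    refine ⟨fun h => hMbot (le_bot_iff.mp (h ▸ hMz)), z, hz, fun i hi => ?_⟩
    rw [mul_comm]; exact hi
  have hMeq : annI z = M := hmax _ hann hMz
  refine ⟨⟨?_, ?_⟩, z, fun y => by rw [← hMeq]; rfl⟩
  · intro h
    have : (1 : R) ∈ M := h ▸ Submodule.mem_top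
    rw [← hMeq, mem_annI, one_mul] at this
    exact hz this
  · intro a b hab
    by_cases ha : a ∈ M
    · exact Or.inl ha
    · right
      have haz : a * z ≠ 0 := fun h => ha (by rw [← hMeq, mem_annI]; exact h)
      have hsub : M ≤ annI (a * z) := fun m hm => by
        rw [mem_annI]
        have : m * z = 0 := by rw [← hMeq] at hm; exact hm
        rw [show m * (a * z) = a * (m * z) by ring, this, mul_zero]
      have hann2 : IsAnnIdeal (annI (a * z)) := by
        refine ⟨fun h => hMbot (le_bot_iff.mp (h ▸ hsub)), a * z, haz, fun i hi => ?_⟩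
        rw [mul_comm]; exact hi
      have heq2 : annI (a * z) = M := hmax _ hann2 hsub
      rw [← heq2, mem_annI]
      rw [← hMeq, mem_annI] at hab
      rw [show b * (a * z) = a * b * z by ring]
      exact hab

theorem stmt11 {R : Type*} [CommRing R] [IsReduced R] :
    (∀ I : Ideal R, IsAnnIdeal I →
        ∃ M : Ideal R, IsAnnIdeal M ∧ (∀ J : Ideal R, IsAnnIdeal J → M ≤ J → J = M) ∧ I ≤ M) ↔
      sInf {P : Ideal R | P.IsPrime ∧ ∃ x : R, ∀ y : R, y ∈ P ↔ y * x = 0} = ⊥ := by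
  constructor
  · intro H
    rw [eq_bot_iff]
    intro a ha
    rw [Ideal.mem_sInf] at ha
    rw [Ideal.mem_bot]
    by_contra hane
    -- helper: any element of B(R) gives a contradiction when Ann(a) = ⊥
    by_cases hAnn : annI a = ⊥
    · -- Ann(a) = 0
      have hB : ∀ P ∈ {P : Ideal R | P.IsPrime ∧ ∃ x : R, ∀ y : R, y ∈ P ↔ y * x = 0},
          False := by
        intro P hP
        obtain ⟨hPp, x, hx⟩ := hP
        have hx0 : x ≠ 0 := by
          intro h
          apply hPp.ne_top
          rw [eq_top_iff]
          intro y _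
          rw [hx, h, mul_zero]
        have : a * x = 0 := (hx a).mp (ha ⟨hPp, x, hx⟩)
        have : x ∈ annI a := by rw [mem_annI, mul_comm]; exact this
        rw [hAnn, Ideal.mem_bot] at this
        exact hx0 this
      -- so B(R) is empty; show it's nonempty
      by_cases hzd : ∃ b c : R, b ≠ 0 ∧ c ≠ 0 ∧ b * c = 0
      · obtain ⟨b, c, hb, hc, hbc⟩ := hzd
        have hIann : IsAnnIdeal (Ideal.span {b}) := by
          refine ⟨?_, c, hc, ?_⟩
          · intro h
            exact hb (by simpa [Ideal.span_eq_bot] using h)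
          · intro i hi
            rw [Ideal.mem_span_singleton] at hi
            obtain ⟨r, rfl⟩ := hi
            rw [show c * (b * r) = b * c * r by ring, hbc, zero_mul]
        obtain ⟨M, hM, hmax, _⟩ := H _ hIann
        exact hB M (max_ann_prime hM hmax)
      · -- no zero divisors, nontrivial (a ≠ 0), so ⊥ is prime and ⊥ = Ann(1)
        push_neg at hzd
        have hbot : (⊥ : Ideal R).IsPrime := by
          constructor
          · intro h
            have : (1 : R) ∈ (⊥ : Ideal R) := h ▸ Submodule.mem_top
            rw [Ideal.mem_bot] at this
            exact hane (by rw [← mul_one a, this, mul_zero])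
          · intro x y hxy
            rw [Ideal.mem_bot] at hxy
            by_cases hx : x = 0
            · exact Or.inl (Ideal.mem_bot.mpr hx)
            · right
              rw [Ideal.mem_bot]
              by_contra hy
              exact hzd x y hx hy hxy
        exact hB ⊥ ⟨hbot, 1, fun y => by simp [Ideal.mem_bot]⟩
    · -- Ann(a) ≠ 0 : it is an annihilating ideal
      have hIann : IsAnnIdeal (annI a) := ⟨hAnn, a, hane, fun i hi => by
        rw [mul_comm]; exact hi⟩
      obtain ⟨M, hM, hmax, hle⟩ := H _ hIann
      obtain ⟨hMp, hMB⟩ := max_ann_prime hM hmax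
      obtain ⟨x, hx⟩ := hMB
      have haM : a ∈ M := ha ⟨hMp, x, hx⟩
      have hax : a * x = 0 := (hx a).mp haM
      have hxM : x ∈ M := hle (by rw [mem_annI, mul_comm]; exact hax)
      have hxx : x * x = 0 := (hx x).mp hxM
      have hx0 : x = 0 := red_sq hxx
      apply hMp.ne_top
      rw [eq_top_iff]
      intro y _
      rw [hx, hx0, mul_zero]
  · intro H I hI
    obtain ⟨hIbot, x, hx, hxI⟩ := hI
    have hxnot : x ∉ sInf {P : Ideal R | P.IsPrime ∧ ∃ x : R, ∀ y : R, y ∈ P ↔ y * x = 0} := by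
      rw [H, Ideal.mem_bot]; exact hx
    rw [Ideal.mem_sInf] at hxnot
    push_neg at hxnot
    obtain ⟨P, ⟨hPp, y, hy⟩, hxP⟩ := hxnot
    have hIle : I ≤ P := by
      intro i hi
      rcases hPp.mem_or_mem (show x * i ∈ P from (hy _).mpr (by
        rw [show x * i * y = (x * i) * y by ring]
        -- x * i = 0
        rw [hxI i hi, zero_mul])) with h | h
      · exact absurd h hxP
      · exact h
    have hy0 : y ≠ 0 := by
      intro h
      apply hPp.ne_top
      rw [eq_top_iff]
      intro z _
      rw [hy, h, mul_zero]
    refine ⟨P, ⟨?_, y, hy0, fun i hi => by rw [mul_comm]; exact (hy i).mp hi⟩, ?_, hIle⟩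
    · intro h
      exact hIbot (le_bot_iff.mp (h ▸ hIle))
    · intro J hJ hPJ
      obtain ⟨hJbot, z, hz, hzJ⟩ := hJ
      have hzP : z ∉ P := by
        intro hzP
        exact hz (red_sq (hzJ z (hPJ hzP)))
      apply le_antisymm _ hPJ
      intro j hj
      rcases hPp.mem_or_mem (show z * j ∈ P from (hy _).mpr (by rw [hzJ j hj, zero_mul])) with
        h | h
      · exact absurd h hzP
      · exact h
end

section
/- Let R be a reduced commutative ring with unity with more than two minimal prime ideals, and let D be a dominating set of AG(R). Then |B(R)| ≤ |D|; in particular |B(R)| ≤ dt(AG(R)). -/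
theorem stmt14 {R : Type*} [CommRing R] [IsReduced R]
    (hMin : ∃ P₁ P₂ P₃ : Ideal R, P₁ ∈ minimalPrimes R ∧ P₂ ∈ minimalPrimes R ∧
      P₃ ∈ minimalPrimes R ∧ P₁ ≠ P₂ ∧ P₁ ≠ P₃ ∧ P₂ ≠ P₃)
    (D : Set (Ideal R)) (hD : ∀ I ∈ D, IsAnnIdeal I)
    (hdom : ∀ I : Ideal R, IsAnnIdeal I → I ∈ D ∨ ∃ J ∈ D, J ≠ I ∧ I * J = ⊥) :
    (∃ f : {P : Ideal R // P.IsPrime ∧ ∃ x : R, ∀ y : R, y ∈ P ↔ y * x = 0} → D,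
        Function.Injective f) ∧
      Cardinal.mk {P : Ideal R // P.IsPrime ∧ ∃ x : R, ∀ y : R, y ∈ P ↔ y * x = 0} ≤
        Cardinal.mk D := by
  classical
  obtain ⟨P₁, P₂, P₃, h₁, h₂, h₃, h₁₂, h₁₃, h₂₃⟩ := hMin
  set B := {P : Ideal R // P.IsPrime ∧ ∃ x : R, ∀ y : R, y ∈ P ↔ y * x = 0} with hB
  -- witnesses are nonzero
  have hxne : ∀ (P : Ideal R), P.IsPrime → ∀ x : R, (∀ y : R, y ∈ P ↔ y * x = 0) →
      x ≠ 0 := by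
    intro P hP x hx hx0
    exact hP.ne_top (Ideal.eq_top_iff_one _ |>.mpr ((hx 1).mpr (by rw [hx0, mul_zero])))
  -- no prime equals ⊥
  have hbot : ∀ P : Ideal R, P.IsPrime → P ≠ ⊥ := by
    intro P hP hPbot
    subst hPbot
    have e1 : P₁ = ⊥ := le_antisymm (h₁.2 ⟨hP, bot_le⟩ bot_le) bot_le
    have e2 : P₂ = ⊥ := le_antisymm (h₂.2 ⟨hP, bot_le⟩ bot_le) bot_le
    exact h₁₂ (e1.trans e2.symm)
  -- B elements are annihilating ideals
  have hAnn : ∀ b : B, IsAnnIdeal b.val := by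
    rintro ⟨P, hP, x, hx⟩
    exact ⟨hbot P hP, x, hxne P hP x hx,
      fun i hi => by rw [mul_comm]; exact (hx i).mp hi⟩
  -- two primes with product zero is impossible
  have hPQ : ∀ P Q : Ideal R, P.IsPrime → Q.IsPrime → P * Q = ⊥ → False := by
    intro P Q hP hQ hpq
    have key : ∀ M : Ideal R, M ∈ minimalPrimes R → M = P ∨ M = Q := by
      intro M hM
      have hMp : M.IsPrime := hM.1.1
      have : P ≤ M ∨ Q ≤ M := hMp.mul_le.mp (hpq ▸ bot_le)
      rcases this with h | h
      · exact Or.inl (le_antisymm (hM.2 ⟨hP, bot_le⟩ h) h)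
      · exact Or.inr (le_antisymm (hM.2 ⟨hQ, bot_le⟩ h) h)
    rcases key P₁ h₁ with e1 | e1 <;> rcases key P₂ h₂ with e2 | e2 <;>
      rcases key P₃ h₃ with e3 | e3 <;>
      first
        | exact h₁₂ (e1.trans e2.symm)
        | exact h₁₃ (e1.trans e3.symm)
        | exact h₂₃ (e2.trans e3.symm)
  -- incomparability of distinct annihilator primes
  have hinc : ∀ a b : B, a.val ≠ b.val → ¬ a.val ≤ b.val := by
    rintro ⟨P, hP, xP, hxP⟩ ⟨Q, hQ, xQ, hxQ⟩ hne hle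
    simp only at hne hle
    have hQP : ¬ Q ≤ P := fun h => hne (le_antisymm hle h)
    obtain ⟨q, hqQ, hqP⟩ := SetLike.not_le_iff_exists.mp hQP
    have : q * xQ = 0 := (hxQ q).mp hqQ
    have hmem : q * xQ ∈ P := by rw [this]; exact P.zero_mem
    rcases hP.mem_or_mem hmem with h | h
    · exact hqP h
    · have : xQ ∈ Q := hle h
      have : xQ = 0 := IsNilpotent.eq_zero ⟨2, by rw [pow_two]; exact (hxQ xQ).mp this⟩
      exact hxne Q hQ xQ hxQ this
  -- choose dominating partner
  have hEx : ∀ b : B, ∃ J, J ∈ D ∧ (J = b.val ∨ (J ≠ b.val ∧ b.val * J = ⊥)) := by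
    intro b
    rcases hdom b.val (hAnn b) with h | ⟨J, hJ, hJne, hJmul⟩
    · exact ⟨b.val, h, Or.inl rfl⟩
    · exact ⟨J, hJ, Or.inr ⟨hJne, hJmul⟩⟩
  let f : B → D := fun b => ⟨(hEx b).choose, (hEx b).choose_spec.1⟩
  have hf : Function.Injective f := by
    intro a b hab
    have ha := (hEx a).choose_spec.2
    have hb := (hEx b).choose_spec.2
    have hJeq : (hEx a).choose = (hEx b).choose := congrArg Subtype.val hab
    rw [hJeq] at ha
    set J := (hEx b).choose with hJ
    have hJD : J ∈ D := (hEx b).choose_spec.1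
    rcases ha with ha | ⟨hane, hamul⟩ <;> rcases hb with hbeq | ⟨hbne, hbmul⟩
    · exact Subtype.ext (ha.symm.trans hbeq)
    · exact absurd (ha ▸ hbmul) (fun h => hPQ b.val a.val b.prop.1 a.prop.1 h)
    · exact absurd (hbeq ▸ hamul) (fun h => hPQ a.val b.val a.prop.1 b.prop.1 h)
    · -- both dominated by the same J
      by_cases hval : a.val = b.val
      · exact Subtype.ext hval
      exfalso
      obtain ⟨q, hqb, hqa⟩ := SetLike.not_le_iff_exists.mp
        (hinc b a (fun h => hval h.symm))
      have hJa : J ≤ a.val := by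
        intro j hj
        have : q * j = 0 := by
          have : q * j ∈ b.val * J := Ideal.mul_mem_mul hqb hj
          rwa [hbmul, Ideal.mem_bot] at this
        have hmem : q * j ∈ a.val := by rw [this]; exact a.val.zero_mem
        rcases a.prop.1.mem_or_mem hmem with h | h
        · exact absurd h hqa
        · exact h
      have hJbot : J = ⊥ := by
        rw [eq_bot_iff]
        intro j hj
        have : j * j ∈ a.val * J := Ideal.mul_mem_mul (hJa hj) hj
        rw [hamul, Ideal.mem_bot] at this
        have : j = 0 := IsNilpotent.eq_zero ⟨2, by rw [pow_two]; exact this⟩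
        simp [this]
      exact (hD J hJD).1 hJbot
  exact ⟨⟨f, hf⟩, Cardinal.mk_le_of_injective hf⟩
end

section
/- Let R be a reduced commutative ring with unity whose zero ideal is not fixed-place, i.e., ⋂_{P ∈ B(R)} P ≠ {0}. Then every dominating set of AG(R) is infinite; hence the domination number and total domination number of AG(R) are infinite. -/
/-- `B(R)`: the set of prime ideals of the form `Ann(x)`. -/
def BourbakiB (R : Type*) [CommRing R] : Set (Ideal R) :=
  {P : Ideal R | P.IsPrime ∧ ∃ x : R, ∀ y : R, y ∈ P ↔ y * x = 0}

/-- The annihilator of an element, as an ideal. -/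
def annR {R : Type*} [CommRing R] (b : R) : Ideal R where
  carrier := {y | y * b = 0}
  zero_mem' := zero_mul b
  add_mem' := by
    intro x y hx hy
    simp only [Set.mem_setOf_eq] at hx hy ⊢
    rw [add_mul, hx, hy, add_zero]
  smul_mem' := by
    intro c x hx
    simp only [smul_eq_mul, Set.mem_setOf_eq] at hx ⊢
    rw [mul_assoc, hx, mul_zero]

theorem mem_annR {R : Type*} [CommRing R] {b y : R} : y ∈ annR b ↔ y * b = 0 := Iff.rfl

theorem stmt16 {R : Type*} [CommRing R] [IsReduced R]
    (hfix : sInf (BourbakiB R) ≠ ⊥) :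
    ∀ D : Set (Ideal R), (∀ I ∈ D, IsAnnIdeal I) →
      (∀ I : Ideal R, IsAnnIdeal I → I ∈ D ∨ ∃ J ∈ D, J ≠ I ∧ I * J = ⊥) →
      D.Infinite := by
  classical
  intro D hD hdom
  obtain ⟨a, haI, ha0⟩ := (Submodule.ne_bot_iff _).mp hfix
  have haB : ∀ P ∈ BourbakiB R, a ∈ P := fun P hP => Submodule.mem_sInf.mp haI P hP
  have sq0 : ∀ x : R, x * x = 0 → x = 0 := by
    intro x h
    exact IsNilpotent.eq_zero ⟨2, by rwa [pow_two]⟩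
  -- a times a nonzero multiple of a is nonzero
  have fact1 : ∀ c x : R, c = a * x → c ≠ 0 → a * c ≠ 0 := by
    intro c x hcx hc0 hac
    apply hc0
    apply sq0
    calc c * c = x * (a * c) := by rw [hcx]; ring
    _ = 0 := by rw [hac, mul_zero]
  -- the annihilator of a nonzero multiple of a is not prime
  have notPrime : ∀ c x : R, c = a * x → c ≠ 0 →
      ∃ r s : R, r * s * c = 0 ∧ r * c ≠ 0 ∧ s * c ≠ 0 := by
    intro c x hcx hc0
    by_contra hcon
    push_neg at hcon
    have hprime : (annR c).IsPrime := by
      constructor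
      · intro htop
        have h1 : (1 : R) ∈ annR c := htop ▸ Submodule.mem_top
        rw [mem_annR, one_mul] at h1
        exact hc0 h1
      · intro r s hrs
        rw [mem_annR] at hrs
        by_cases hr : r * c = 0
        · exact Or.inl (mem_annR.mpr hr)
        · exact Or.inr (mem_annR.mpr (hcon r s hrs hr))
    have hmem : annR c ∈ BourbakiB R := ⟨hprime, c, fun y => Iff.rfl⟩
    exact fact1 c x hcx hc0 (mem_annR.mp (haB _ hmem))
  -- basic product fact
  have prodne : ∀ I K : Ideal R, I ≠ ⊥ → I ≤ K → I * K ≠ ⊥ ∧ K * I ≠ ⊥ := by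
    intro I K hI hIK
    obtain ⟨y, hyI, hy0⟩ := (Submodule.ne_bot_iff I).mp hI
    have hyy : y * y ≠ 0 := fun h => hy0 (sq0 y h)
    constructor
    · intro h
      apply hyy
      have := Ideal.mul_mem_mul hyI (hIK hyI)
      rw [h] at this
      exact (Submodule.mem_bot R).mp this
    · intro h
      apply hyy
      have := Ideal.mul_mem_mul (hIK hyI) hyI
      rw [h] at this
      exact (Submodule.mem_bot R).mp this
  -- the main step
  have step : ∀ b x : R, b = a * x → b ≠ 0 → annR b ≠ ⊥ →
      ∃ b' x' J, b' = a * x' ∧ b' ≠ 0 ∧ annR b < annR b' ∧ J ∈ D ∧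
        (J = annR b ∨ (annR b * J = ⊥ ∧ ∃ j ∈ J, ∃ y ∈ annR (R := R) b', j * y ≠ 0)) := by
    intro b x hbx hb0 hbot
    have hvert : IsAnnIdeal (annR b) := by
      refine ⟨hbot, b, hb0, ?_⟩
      intro i hi
      rw [mul_comm]
      exact mem_annR.mp hi
    have hmono : ∀ r : R, annR b ≤ annR (r * b) := by
      intro r y hy
      rw [mem_annR] at hy ⊢
      calc y * (r * b) = r * (y * b) := by ring
      _ = 0 := by rw [hy, mul_zero]
    rcases hdom (annR b) hvert with hin | ⟨J, hJD, hJne, hJmul⟩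
    · -- equality case: just grow strictly
      obtain ⟨r, s, hrs, hr, hs⟩ := notPrime b x hbx hb0
      have hsmem : s ∈ annR (r * b) := by
        rw [mem_annR]
        calc s * (r * b) = r * s * b := by ring
        _ = 0 := hrs
      refine ⟨r * b, r * x, annR b, by rw [hbx]; ring, hr, ?_, hin, Or.inl rfl⟩
      exact lt_of_le_of_ne (hmono r) (fun h => hs (mem_annR.mp (by rw [h]; exact hsmem)))
    · -- annihilation case
      have hJvert := hD J hJD
      obtain ⟨hJbot, w, hw0, hwJ⟩ := hJvert
      obtain ⟨j₀, hj₀J, hj₀0⟩ := (Submodule.ne_bot_iff J).mp hJbot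
      have hprod : ∀ y ∈ annR (R := R) b, ∀ j ∈ J, y * j = 0 := by
        intro y hy j hj
        have := Ideal.mul_mem_mul hy hj
        rw [hJmul] at this
        exact (Submodule.mem_bot R).mp this
      have hj₀b : j₀ * b ≠ 0 := by
        intro h
        exact hj₀0 (sq0 j₀ (hprod j₀ (mem_annR.mpr h) j₀ hj₀J))
      by_cases hcase : ∀ z : R, (∀ i ∈ J, z * i = 0) → z * b = 0
      · -- Ann(J) ≤ Ann(b): use non-primeness
        obtain ⟨r, s, hrs, hr, hs⟩ := notPrime b x hbx hb0
        have hsmem : s ∈ annR (r * b) := by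
          rw [mem_annR]
          calc s * (r * b) = r * s * b := by ring
          _ = 0 := hrs
        have hsJ : ∃ j ∈ J, s * j ≠ 0 := by
          by_contra hc
          push_neg at hc
          exact hs (hcase s hc)
        obtain ⟨j, hjJ, hjs⟩ := hsJ
        refine ⟨r * b, r * x, J, by rw [hbx]; ring, hr, ?_, hJD,
          Or.inr ⟨hJmul, j, hjJ, s, hsmem, by rwa [mul_comm]⟩⟩
        exact lt_of_le_of_ne (hmono r) (fun h => hs (mem_annR.mp (by rw [h]; exact hsmem)))
      · -- some z kills J but not b
        push_neg at hcase
        obtain ⟨z, hzJ, hzb⟩ := hcase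
        have hj₀mem : j₀ ∈ annR (z * b) := by
          rw [mem_annR]
          calc j₀ * (z * b) = z * j₀ * b := by ring
          _ = 0 := by rw [hzJ j₀ hj₀J, zero_mul]
        refine ⟨z * b, z * x, J, by rw [hbx]; ring, hzb, ?_, hJD,
          Or.inr ⟨hJmul, j₀, hj₀J, j₀, hj₀mem, fun h => hj₀0 (sq0 _ h)⟩⟩
        exact lt_of_le_of_ne (hmono z)
          (fun h => hj₀b (mem_annR.mp (by rw [h]; exact hj₀mem)))
  -- base point: b₁ = r₀ * a with ann b₁ ≠ ⊥
  obtain ⟨r₀, s₀, hrs₀, hr₀, hs₀⟩ := notPrime a 1 (by rw [mul_one]) ha0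
  have hb₁x : r₀ * a = a * r₀ := mul_comm _ _
  have hbot₁ : annR (r₀ * a) ≠ ⊥ := by
    apply (Submodule.ne_bot_iff _).mpr
    refine ⟨s₀, ?_, ?_⟩
    · rw [mem_annR]
      calc s₀ * (r₀ * a) = r₀ * s₀ * a := by ring
      _ = 0 := hrs₀
    · intro h
      apply hs₀
      rw [h, zero_mul]
  choose f fx fJ hfx hf0 hflt hfJD hfdom using step
  -- the sequence
  let Inv : R × R → Prop := fun p => p.1 = a * p.2 ∧ p.1 ≠ 0 ∧ annR p.1 ≠ ⊥
  let step1 : {p : R × R // Inv p} → {p : R × R // Inv p} := fun p =>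
    ⟨(f p.1.1 p.1.2 p.2.1 p.2.2.1 p.2.2.2, fx p.1.1 p.1.2 p.2.1 p.2.2.1 p.2.2.2),
      hfx p.1.1 p.1.2 p.2.1 p.2.2.1 p.2.2.2,
      hf0 p.1.1 p.1.2 p.2.1 p.2.2.1 p.2.2.2,
      ((bot_lt_iff_ne_bot.mpr p.2.2.2).trans_le
        (hflt p.1.1 p.1.2 p.2.1 p.2.2.1 p.2.2.2).le).ne'⟩
  let seq : ℕ → {p : R × R // Inv p} := fun n =>
    Nat.rec ⟨(r₀ * a, r₀), hb₁x, hr₀, hbot₁⟩ (fun _ q => step1 q) n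
  let B : ℕ → R := fun n => (seq n).1.1
  let X : ℕ → R := fun n => (seq n).1.2
  have H1 : ∀ n, B n = a * X n := fun n => (seq n).2.1
  have H2 : ∀ n, B n ≠ 0 := fun n => (seq n).2.2.1
  have H3 : ∀ n, annR (B n) ≠ ⊥ := fun n => (seq n).2.2.2
  have hBsucc : ∀ n, B (n + 1) = f (B n) (X n) (H1 n) (H2 n) (H3 n) := fun n => rfl
  have hlt : ∀ n, annR (B n) < annR (B (n + 1)) := by
    intro n
    rw [hBsucc n]
    exact hflt (B n) (X n) (H1 n) (H2 n) (H3 n)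
  let Js : ℕ → Ideal R := fun n => fJ (B n) (X n) (H1 n) (H2 n) (H3 n)
  have hJmem : ∀ n, Js n ∈ D := fun n => hfJD (B n) (X n) (H1 n) (H2 n) (H3 n)
  have hdomprop : ∀ n, Js n = annR (B n) ∨
      (annR (B n) * Js n = ⊥ ∧ ∃ j ∈ Js n, ∃ y ∈ annR (R := R) (B (n + 1)), j * y ≠ 0) := by
    intro n
    have := hfdom (B n) (X n) (H1 n) (H2 n) (H3 n)
    rwa [← hBsucc n] at this
  have hmonoS : StrictMono (fun n => annR (B n)) := strictMono_nat_of_lt_succ hlt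
  have aux : ∀ k l, k < l → Js k ≠ Js l := by
    intro k l hkl heq
    have hIlt : annR (B k) < annR (B l) := hmonoS hkl
    rcases hdomprop k with hk | ⟨hkmul, j, hjJ, y, hy, hjy⟩
    · rcases hdomprop l with hl | ⟨hlmul, _⟩
      · exact hIlt.ne (by rw [← hk, heq, hl])
      · have := (prodne (annR (B k)) (annR (B l)) (H3 k) hIlt.le).2
        apply this
        rw [← hk, heq]
        exact hlmul
    · rcases hdomprop l with hl | ⟨hlmul, _⟩
      · have := (prodne (annR (B k)) (annR (B l)) (H3 k) hIlt.le).1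
        apply this
        rw [← hl, ← heq]
        exact hkmul
      · have hy' : y ∈ annR (B l) := hmonoS.monotone (Nat.succ_le_of_lt hkl) hy
        have hmm : y * j ∈ annR (B l) * Js l := Ideal.mul_mem_mul hy' (heq ▸ hjJ)
        rw [hlmul] at hmm
        exact hjy (by rw [mul_comm]; exact (Submodule.mem_bot R).mp hmm)
  have hinj : Function.Injective Js := by
    intro k l h
    rcases lt_trichotomy k l with hkl | hkl | hkl
    · exact absurd h (aux k l hkl)
    · exact hkl
    · exact absurd h.symm (aux l k hkl)
  exact Set.infinite_of_injective_forall_mem hinj hJmem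
end

section
/- Let R be a reduced commutative ring with unity, and let D be a total dominating set of AG(R). Choose for each I ∈ D a nonzero element a_I ∈ I. Then {a_I : I ∈ D} is a total dominating set of the zero-divisor graph Γ(R); consequently the total domination number of Γ(R) is at most that of AG(R). -/
theorem stmt17 {R : Type*} [CommRing R] [IsReduced R]
    (hnd : ∃ x y : R, x ≠ 0 ∧ y ≠ 0 ∧ x * y = 0)
    (D : Set (Ideal R)) (hD : ∀ I ∈ D, IsAnnIdeal I)
    (htot : ∀ I : Ideal R, IsAnnIdeal I → ∃ J ∈ D, J ≠ I ∧ I * J = ⊥)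
    (a : Ideal R → R) (haI : ∀ I ∈ D, a I ∈ I ∧ a I ≠ 0) :
    ((∀ b ∈ {x : R | ∃ I ∈ D, x = a I}, b ≠ 0 ∧ ∃ x : R, x ≠ 0 ∧ x * b = 0) ∧
      ∀ b : R, b ≠ 0 → (∃ x : R, x ≠ 0 ∧ x * b = 0) →
        ∃ c ∈ {x : R | ∃ I ∈ D, x = a I}, c ≠ b ∧ b * c = 0) ∧
    Cardinal.mk {x : R | ∃ I ∈ D, x = a I} ≤ Cardinal.mk D := by
  refine ⟨⟨?_, ?_⟩, ?_⟩
  · rintro b ⟨I, hI, rfl⟩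
    obtain ⟨haIm, haIne⟩ := haI I hI
    obtain ⟨-, x, hx, hxann⟩ := hD I hI
    exact ⟨haIne, x, hx, hxann _ haIm⟩
  · intro b hb ⟨x, hx, hxb⟩
    have hIann : IsAnnIdeal (Ideal.span {b}) := by
      refine ⟨?_, x, hx, ?_⟩
      · simp [Ideal.span_singleton_eq_bot, hb]
      · intro i hi
        obtain ⟨r, rfl⟩ := Ideal.mem_span_singleton'.mp hi
        rw [mul_comm r b, ← mul_assoc, hxb, zero_mul]
    obtain ⟨J, hJD, hJne, hIJ⟩ := htot _ hIann
    obtain ⟨haJm, haJne⟩ := haI J hJD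
    have hbc : b * a J = 0 := by
      have : b * a J ∈ Ideal.span {b} * J :=
        Ideal.mul_mem_mul (Ideal.mem_span_singleton_self b) haJm
      rw [hIJ] at this
      exact this
    refine ⟨a J, ⟨J, hJD, rfl⟩, ?_, hbc⟩
    intro h
    rw [h] at hbc
    exact hb (IsReduced.eq_zero _ ⟨2, by simpa [sq] using hbc⟩)
  · have : {x : R | ∃ I ∈ D, x = a I} = a '' D := by
      ext x; simp [eq_comm]
    rw [this]
    exact Cardinal.mk_image_le
end

section
/- Let R be a reduced commutative ring with unity. If there exists a ∈ R with Ann(a) a prime ideal P (so B(R) ≠ ∅), then the singleton {P} is open in Min(R) with the Zariski topology, and {P ∈ Min(R) : a ∉ P} = {P}. -/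
theorem stmt18 {R : Type*} [CommRing R] [IsReduced R] (a : R) (P : Ideal R)
    (hP : P.IsPrime) (hann : ∀ y : R, y ∈ P ↔ y * a = 0) :
    {Q ∈ minimalPrimes R | a ∉ Q} = {P} ∧
    IsOpen {x : {p : PrimeSpectrum R // p.asIdeal ∈ minimalPrimes R} |
      x.1.asIdeal = P} := by
  have ha : a ∉ P := by
    intro h
    have haa : a * a = 0 := (hann a).mp h
    have ha0 : a = 0 := IsNilpotent.eq_zero ⟨2, by rw [pow_two]; exact haa⟩
    exact hP.ne_top (Ideal.eq_top_iff_one P |>.mpr ((hann 1).mpr (by rw [ha0, mul_zero])))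
  have hPQ : ∀ Q : Ideal R, Q.IsPrime → a ∉ Q → P ≤ Q := by
    intro Q hQ haQ y hy
    rcases hQ.mem_or_mem (show y * a ∈ Q by rw [(hann y).mp hy]; exact Q.zero_mem) with h | h
    · exact h
    · exact absurd h haQ
  have hPmin : P ∈ minimalPrimes R :=
    ⟨⟨hP, bot_le⟩, fun J hJ hle => hPQ J hJ.1 (fun h => ha (hle h))⟩
  constructor
  · ext Q
    simp only [Set.mem_setOf_eq, Set.mem_singleton_iff]
    constructor
    · rintro ⟨hQmin, haQ⟩
      exact le_antisymm (hQmin.2 ⟨hP, bot_le⟩ (hPQ Q hQmin.1.1 haQ)) (hPQ Q hQmin.1.1 haQ)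
    · rintro rfl
      exact ⟨hPmin, ha⟩
  · have heq : {x : {p : PrimeSpectrum R // p.asIdeal ∈ minimalPrimes R} | x.1.asIdeal = P}
        = Subtype.val ⁻¹' (PrimeSpectrum.basicOpen a : Set (PrimeSpectrum R)) := by
      ext x
      simp only [Set.mem_setOf_eq, Set.mem_preimage, SetLike.mem_coe,
        PrimeSpectrum.mem_basicOpen]
      constructor
      · intro h; rw [h]; exact ha
      · intro h
        exact le_antisymm (x.2.2 ⟨hP, bot_le⟩ (hPQ _ x.1.isPrime h)) (hPQ _ x.1.isPrime h)
    rw [heq]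
    exact (PrimeSpectrum.basicOpen a).isOpen.preimage continuous_subtype_val
end
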